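/- Let A be a positive self-adjoint operator on a Hilbert space H with compact inverse and smallest eigenvalue λ₁ > 0, let α, ν > 0, and let y solve y' + ν A y + α² A y' = 0 with y(0) = v₀ ∈ D(A^{1/2}). Then for all t > 0, ‖y(t)‖² + α²‖A^{1/2} y(t)‖² ≤ e^{-d₀ t}(‖v₀‖² + α²‖A^{1/2} v₀‖²), where d₀ = (ν/2)·min{α⁻², λ₁}. -/

import Mathlib

open scoped RealInnerProductSpace

theorem stmt3 {H : Type*} [NormedAddCommGroup H] [InnerProductSpace ℝ H]
    (A : H →ₗ[ℝ] H) (hsym : ∀ x y : H, ⟪A x, y⟫ = ⟪x, A y⟫)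
    (lam₁ : ℝ) (hlam₁ : 0 < lam₁)
    (hcoerc : ∀ x : H, lam₁ * ‖x‖ ^ 2 ≤ ⟪A x, x⟫)
    (α ν : ℝ) (hα : 0 < α) (hν : 0 < ν)
    (y y' : ℝ → H) (hy : ∀ t : ℝ, HasDerivAt y (y' t) t)
    (heq : ∀ t : ℝ, y' t + ν • A (y t) + α ^ 2 • A (y' t) = 0)
    (v₀ : H) (h0 : y 0 = v₀) :
    ∀ t : ℝ, 0 < t →
      ‖y t‖ ^ 2 + α ^ 2 * ⟪A (y t), y t⟫ ≤
        Real.exp (-(ν / 2 * min (α ^ 2)⁻¹ lam₁) * t) *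
          (‖v₀‖ ^ 2 + α ^ 2 * ⟪A v₀, v₀⟫) := by
  have hα2 : (0:ℝ) < α ^ 2 := by positivity
  set β : ℝ := ν / α ^ 2 with hβdef
  have hβ : 0 < β := div_pos hν hα2
  have hβα : β * α ^ 2 = ν := div_mul_cancel₀ ν (ne_of_gt hα2)
  clear_value β
  have ycont : Continuous y := continuous_iff_continuousAt.mpr fun s => (hy s).continuousAt
  have hexpc : Continuous fun τ : ℝ => Real.exp (β * τ) :=
    Real.continuous_exp.comp (continuous_const.mul continuous_id)
  have hc : ∀ c : H, Continuous fun τ : ℝ => β * Real.exp (β * τ) * ⟪y τ, c⟫ :=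
    fun c => (continuous_const.mul hexpc).mul (ycont.inner continuous_const)
  -- the base derivative lemma: testing the equation against a fixed vector c
  have hbase : ∀ (c : H) (s : ℝ),
      HasDerivAt (fun u : ℝ => ⟪y u, c⟫ + α ^ 2 * ⟪y u, A c⟫)
        (-(ν * ⟪y s, A c⟫)) s := by
    intro c s
    have hrel : ⟪y' s, c⟫ + α ^ 2 * ⟪y' s, A c⟫ = -(ν * ⟪y s, A c⟫) := by
      have h := congrArg (fun v => ⟪v, c⟫) (heq s)
      simp only [inner_add_left, real_inner_smul_left, inner_zero_left] at h
      rw [hsym (y' s) c, hsym (y s) c] at h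
      linarith
    have d1 : HasDerivAt (fun u : ℝ => ⟪y u, c⟫) ⟪y' s, c⟫ s := by
      simpa using (hy s).inner ℝ (hasDerivAt_const s c)
    have d2 : HasDerivAt (fun u : ℝ => ⟪y u, A c⟫) ⟪y' s, A c⟫ s := by
      simpa using (hy s).inner ℝ (hasDerivAt_const s (A c))
    have := d1.add (d2.const_mul (α ^ 2))
    rw [← hrel]; exact this
  set E : ℝ → ℝ := fun u => ‖y u‖ ^ 2 + α ^ 2 * ⟪A (y u), y u⟫ with hEdef
  have hEP : ∀ u : ℝ, E u = ⟪y u, y u⟫ + α ^ 2 * ⟪y u, A (y u)⟫ := by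
    intro u
    show ‖y u‖ ^ 2 + α ^ 2 * ⟪A (y u), y u⟫ = _
    rw [← real_inner_self_eq_norm_sq, hsym (y u) (y u)]
  -- key integral identity
  have hkey : ∀ s t : ℝ,
      E t * Real.exp (β * t) =
        (⟪y t, y s⟫ + α ^ 2 * ⟪y t, A (y s)⟫) * Real.exp (β * s)
          + ∫ τ in s..t, β * Real.exp (β * τ) * ⟪y τ, y t⟫ := by
    intro s t
    have hg : ∀ σ : ℝ, HasDerivAt
        (fun u => (⟪y u, y t⟫ + α ^ 2 * ⟪y u, A (y t)⟫) * Real.exp (β * u))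
        (β * Real.exp (β * σ) * ⟪y σ, y t⟫) σ := by
      intro σ
      have h2 : HasDerivAt (fun u : ℝ => Real.exp (β * u)) (β * Real.exp (β * σ)) σ := by
        simpa [mul_comm] using ((hasDerivAt_id σ).const_mul β).exp
      have : HasDerivAt (fun u => (⟪y u, y t⟫ + α ^ 2 * ⟪y u, A (y t)⟫) * Real.exp (β * u)) _ σ :=
        (hbase (y t) σ).mul h2
      convert this using 1
      linear_combination (-(Real.exp (β * σ) * ⟪y σ, A (y t)⟫)) * hβα
    have hcont : Continuous fun σ : ℝ => β * Real.exp (β * σ) * ⟪y σ, y t⟫ := hc (y t)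
    have hFTC := intervalIntegral.integral_eq_sub_of_hasDerivAt
      (f := fun u => (⟪y u, y t⟫ + α ^ 2 * ⟪y u, A (y t)⟫) * Real.exp (β * u))
      (fun σ _ => hg σ) (hcont.intervalIntegrable s t)
    have hsymm1 : ⟪y s, y t⟫ = ⟪y t, y s⟫ := real_inner_comm _ _
    have hsymm2 : ⟪y s, A (y t)⟫ = ⟪y t, A (y s)⟫ :=
      (real_inner_comm _ _).trans ((hsym (y t) (y s)).symm ▸ hsym (y t) (y s))
    rw [hFTC]
    rw [hEP t, hsymm1, hsymm2]
    ring
  -- derivative of E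
  have hEderiv : ∀ s : ℝ, HasDerivAt E (-(2 * ν * ⟪y s, A (y s)⟫)) s := by
    intro s
    obtain ⟨M, hM⟩ : ∃ M : ℝ, ∀ τ ∈ Set.Icc (s - 1) (s + 1),
        β * Real.exp (β * τ) * ‖y τ‖ ≤ M := by
      obtain ⟨M, hM⟩ := (isCompact_Icc (a := s - 1) (b := s + 1)).exists_bound_of_continuousOn
        (f := fun τ : ℝ => β * Real.exp (β * τ) * ‖y τ‖)
        (((continuous_const.mul
          (Real.continuous_exp.comp (continuous_const.mul continuous_id))).mul
          ycont.norm).continuousOn)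
      refine ⟨M, fun τ hτ => (le_abs_self _).trans ?_⟩
      have h2 := hM τ hτ
      rwa [Real.norm_eq_abs] at h2
    have hM0 : 0 < M + 1 := by
      have h2 := hM s (by constructor <;> linarith)
      have h1 : 0 ≤ β * Real.exp (β * s) * ‖y s‖ := by positivity
      linarith
    have hGfun : (fun u : ℝ => E u * Real.exp (β * u)) =
        fun u => (⟪y u, y s⟫ + α ^ 2 * ⟪y u, A (y s)⟫) * Real.exp (β * s)
          + ((∫ τ in s..u, β * Real.exp (β * τ) * ⟪y τ, y s⟫)
            + ∫ τ in s..u, β * Real.exp (β * τ) * ⟪y τ, y u - y s⟫) := by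
      funext u
      rw [hkey s u]
      congr 1
      rw [← intervalIntegral.integral_add
        ((hc (y s)).intervalIntegrable s u) ((hc (y u - y s)).intervalIntegrable s u)]
      congr 1
      funext τ
      rw [inner_sub_right]
      ring
    have hd1 : HasDerivAt
        (fun u => (⟪y u, y s⟫ + α ^ 2 * ⟪y u, A (y s)⟫) * Real.exp (β * s))
        (-(ν * ⟪y s, A (y s)⟫) * Real.exp (β * s)) s := (hbase (y s) s).mul_const _
    have hd2 : HasDerivAt (fun u => ∫ τ in s..u, β * Real.exp (β * τ) * ⟪y τ, y s⟫)
        (β * Real.exp (β * s) * ⟪y s, y s⟫) s :=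
      ((hc (y s)).integral_hasStrictDerivAt s s).hasDerivAt
    have hd3 : HasDerivAt (fun u => ∫ τ in s..u, β * Real.exp (β * τ) * ⟪y τ, y u - y s⟫) 0 s := by
      rw [hasDerivAt_iff_isLittleO, Asymptotics.isLittleO_iff]
      intro c hc
      have hyc : ∀ᶠ u in nhds s, ‖y u - y s‖ < c / (M + 1) := by
        have hcont2 : ContinuousAt (fun u => ‖y u - y s‖) s :=
          ((ycont.sub continuous_const).norm).continuousAt
        have h0 : ‖y s - y s‖ < c / (M + 1) := by
          simp only [sub_self, norm_zero]; positivity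
        exact hcont2.eventually_lt continuousAt_const (by simpa using h0)
      have hnear : ∀ᶠ u in nhds s, u ∈ Set.Icc (s - 1) (s + 1) :=
        Icc_mem_nhds (by linarith) (by linarith)
      filter_upwards [hyc, hnear] with u hu hun
      simp only [intervalIntegral.integral_same, sub_zero, smul_zero, sub_zero]
      have hbound : ∀ τ ∈ Set.uIoc s u,
          ‖β * Real.exp (β * τ) * ⟪y τ, y u - y s⟫‖ ≤ (M + 1) * (c / (M + 1)) := by
        intro τ hτ
        have hτ' : τ ∈ Set.Icc (s - 1) (s + 1) := by
          rw [Set.mem_uIoc] at hτ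
          rcases hτ with ⟨h1, h2⟩ | ⟨h1, h2⟩ <;>
            exact ⟨by rcases hun with ⟨hu1, hu2⟩; linarith, by rcases hun with ⟨hu1, hu2⟩; linarith⟩
        have h1 : ‖β * Real.exp (β * τ) * ⟪y τ, y u - y s⟫‖
            ≤ β * Real.exp (β * τ) * ‖y τ‖ * ‖y u - y s‖ := by
          calc ‖β * Real.exp (β * τ) * ⟪y τ, y u - y s⟫‖
              = β * Real.exp (β * τ) * |⟪y τ, y u - y s⟫| := by
                rw [norm_mul, norm_mul, Real.norm_eq_abs β, abs_of_pos hβ,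
                  Real.norm_eq_abs (Real.exp _), abs_of_pos (Real.exp_pos _), Real.norm_eq_abs]
            _ ≤ β * Real.exp (β * τ) * (‖y τ‖ * ‖y u - y s‖) := by
                have hpos : (0:ℝ) ≤ β * Real.exp (β * τ) := by positivity
                exact mul_le_mul_of_nonneg_left (abs_real_inner_le_norm _ _) hpos
            _ = β * Real.exp (β * τ) * ‖y τ‖ * ‖y u - y s‖ := by ring
        have h2 : β * Real.exp (β * τ) * ‖y τ‖ ≤ M := hM τ hτ'
        calc ‖β * Real.exp (β * τ) * ⟪y τ, y u - y s⟫‖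
            ≤ β * Real.exp (β * τ) * ‖y τ‖ * ‖y u - y s‖ := h1
          _ ≤ (M + 1) * (c / (M + 1)) :=
              mul_le_mul (by linarith) (le_of_lt hu) (norm_nonneg _) (le_of_lt hM0)
      calc ‖∫ τ in s..u, β * Real.exp (β * τ) * ⟪y τ, y u - y s⟫‖
          ≤ (M + 1) * (c / (M + 1)) * |u - s| :=
            intervalIntegral.norm_integral_le_of_norm_le_const hbound
        _ = c * ‖u - s‖ := by rw [Real.norm_eq_abs]; field_simp
    have hG : HasDerivAt (fun u : ℝ => E u * Real.exp (β * u))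
        (-(ν * ⟪y s, A (y s)⟫) * Real.exp (β * s)
          + (β * Real.exp (β * s) * ⟪y s, y s⟫ + 0)) s := by
      rw [hGfun]
      exact hd1.add (hd2.add hd3)
    have hexp : HasDerivAt (fun u : ℝ => Real.exp (-(β * u))) (-β * Real.exp (-(β * s))) s := by
      have := ((hasDerivAt_id s).const_mul (-β)).exp
      simpa [neg_mul, mul_comm] using this
    have hprod : HasDerivAt (fun u => (E u * Real.exp (β * u)) * Real.exp (-(β * u))) _ s :=
      hG.mul hexp
    have hEeq : E = fun u => (E u * Real.exp (β * u)) * Real.exp (-(β * u)) := by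
      funext u
      rw [mul_assoc, ← Real.exp_add]
      simp
    rw [← hEeq] at hprod
    convert hprod using 1
    rw [hEP s]
    have h1 : Real.exp (β * s) * Real.exp (-(β * s)) = 1 := by
      rw [← Real.exp_add]; simp
    linear_combination ((ν + β * α ^ 2) * ⟪y s, A (y s)⟫) * h1 + ⟪y s, A (y s)⟫ * hβα
  -- Grönwall
  set d : ℝ := ν / 2 * min (α ^ 2)⁻¹ lam₁ with hddef
  have hd0 : 0 ≤ d := by
    apply mul_nonneg (by linarith)
    exact le_min (by positivity) (le_of_lt hlam₁)
  have hdlam : d ≤ ν / 2 * lam₁ := by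
    apply mul_le_mul_of_nonneg_left (min_le_right _ _) (by linarith)
  have hdα : d * α ^ 2 ≤ ν / 2 := by
    calc d * α ^ 2 ≤ (ν / 2 * (α ^ 2)⁻¹) * α ^ 2 := by
          apply mul_le_mul_of_nonneg_right _ (le_of_lt hα2)
          exact mul_le_mul_of_nonneg_left (min_le_left _ _) (by linarith)
      _ = ν / 2 := by field_simp
  have hL : ∀ s : ℝ, HasDerivAt (fun u => E u * Real.exp (d * u))
      (-(2 * ν * ⟪y s, A (y s)⟫) * Real.exp (d * s) + E s * (d * Real.exp (d * s))) s := by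
    intro s
    have hde : HasDerivAt (fun u : ℝ => Real.exp (d * u)) (d * Real.exp (d * s)) s := by
      simpa [mul_comm] using ((hasDerivAt_id s).const_mul d).exp
    exact (hEderiv s).mul hde
  have hLnonpos : ∀ s : ℝ,
      -(2 * ν * ⟪y s, A (y s)⟫) * Real.exp (d * s) + E s * (d * Real.exp (d * s)) ≤ 0 := by
    intro s
    have hφ : lam₁ * ‖y s‖ ^ 2 ≤ ⟪y s, A (y s)⟫ := by
      rw [← hsym (y s) (y s)]; exact hcoerc (y s)
    have hφ0 : 0 ≤ ⟪y s, A (y s)⟫ := le_trans (by positivity) hφ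
    have hEs : E s = ‖y s‖ ^ 2 + α ^ 2 * ⟪y s, A (y s)⟫ := by
      rw [hEP s, real_inner_self_eq_norm_sq]
    have hkey2 : d * E s ≤ 2 * ν * ⟪y s, A (y s)⟫ := by
      rw [hEs]
      have h1 : d * ‖y s‖ ^ 2 ≤ ν / 2 * ⟪y s, A (y s)⟫ := by
        calc d * ‖y s‖ ^ 2 ≤ ν / 2 * lam₁ * ‖y s‖ ^ 2 :=
              mul_le_mul_of_nonneg_right hdlam (by positivity)
          _ = ν / 2 * (lam₁ * ‖y s‖ ^ 2) := by ring
          _ ≤ ν / 2 * ⟪y s, A (y s)⟫ := by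
              apply mul_le_mul_of_nonneg_left hφ (by linarith)
      have h2 : d * (α ^ 2 * ⟪y s, A (y s)⟫) ≤ ν / 2 * ⟪y s, A (y s)⟫ := by
        rw [← mul_assoc]
        exact mul_le_mul_of_nonneg_right hdα hφ0
      nlinarith [hν, hφ0]
    have hexp0 : 0 < Real.exp (d * s) := Real.exp_pos _
    nlinarith [hkey2, hexp0]
  have hanti : Antitone (fun u => E u * Real.exp (d * u)) :=
    antitone_of_hasDerivAt_nonpos hL hLnonpos
  intro t ht
  have h1 : E t * Real.exp (d * t) ≤ E 0 * Real.exp (d * 0) := hanti (le_of_lt ht)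
  have hE0 : E 0 = ‖v₀‖ ^ 2 + α ^ 2 * ⟪A v₀, v₀⟫ := by
    show ‖y 0‖ ^ 2 + α ^ 2 * ⟪A (y 0), y 0⟫ = _
    rw [h0]
  have hgoal : E t ≤ Real.exp (-d * t) * (‖v₀‖ ^ 2 + α ^ 2 * ⟪A v₀, v₀⟫) := by
    rw [← hE0]
    have h2 : Real.exp (d * 0) = 1 := by simp
    rw [h2, mul_one] at h1
    have h3 : Real.exp (-d * t) = (Real.exp (d * t))⁻¹ := by
      rw [← Real.exp_neg]; ring_nf
    rw [h3, mul_comm (Real.exp (d * t))⁻¹ (E 0), ← div_eq_mul_inv, le_div_iff₀ (Real.exp_pos _)]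
    exact h1
  calc ‖y t‖ ^ 2 + α ^ 2 * ⟪A (y t), y t⟫ = E t := rfl
    _ ≤ Real.exp (-d * t) * (‖v₀‖ ^ 2 + α ^ 2 * ⟪A v₀, v₀⟫) := hgoal
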